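/- arXiv:2004.05819 — 2 statements merged into one kernel-verified Lean document; each statement's English description precedes it below -/
import Mathlib

section
/- Let (u₁ₙ, u₂ₙ) be a solution of the Gudnason system at index n. Then ∫_𝕋 εₙ⁻² e^{u₂ₙ}(1 − e^{u₂ₙ}) dx ≤ 2𝔑|𝕋| = 2𝔑; here the integrand is nonnegative (since u₂ₙ < 0), so this integral also equals ∫_𝕋 εₙ⁻² e^{u₂ₙ}|1 − e^{u₂ₙ}| dx. -/
open MeasureTheory Real Filter

noncomputable section

abbrev Plane : Type := EuclideanSpace ℝ (Fin 2)

/-- Second directional derivative of `u` at `x` in the direction `v`. -/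
def dirDeriv2 (u : Plane → ℝ) (v x : Plane) : ℝ :=
  deriv (fun t : ℝ => deriv (fun s : ℝ => u (x + s • v)) t) 0

/-- The flat Laplacian on the plane. -/
def lap (u : Plane → ℝ) (x : Plane) : ℝ :=
  ∑ i : Fin 2, dirDeriv2 u (EuclideanSpace.single i 1) x

/-- The data of the Gudnason model on a flat torus `ℝ²/Λ`. -/
structure GudnasonSetting where
  v : Fin 2 → Plane
  N : ℕ
  p : Fin N → Plane
  m : Fin N → ℕ
  𝔑 : ℝ
  α : ℕ → ℝ
  β : ℕ → ℝ
  u₀ : Plane → ℝ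

namespace GudnasonSetting

/-- The lattice orbit of a point: all of its translates by the period lattice. -/
def orbit (S : GudnasonSetting) (q : Plane) : Set Plane :=
  {x | ∃ k : Fin 2 → ℤ, x = q + (k 0 : ℝ) • S.v 0 + (k 1 : ℝ) • S.v 1}

/-- The set of vortex points (together with all of their lattice translates). -/
def Zset (S : GudnasonSetting) : Set Plane := ⋃ i, S.orbit (S.p i)

/-- A fundamental domain of the torus. -/
def fund (S : GudnasonSetting) : Set Plane :=
  (fun st : ℝ × ℝ => st.1 • S.v 0 + st.2 • S.v 1) '' (Set.Ico (0:ℝ) 1 ×ˢ Set.Ico (0:ℝ) 1)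

/-- The total vortex multiplicity `𝔐 = Σ mᵢ`. -/
def 𝔐 (S : GudnasonSetting) : ℝ := ∑ i, (S.m i : ℝ)

/-- `εₙ = 1/(αₙ + βₙ)`. -/
def ε (S : GudnasonSetting) (n : ℕ) : ℝ := 1 / (S.α n + S.β n)

/-- `σₙ = (βₙ - αₙ)/(αₙ + βₙ)`. -/
def σ (S : GudnasonSetting) (n : ℕ) : ℝ := (S.β n - S.α n) / (S.α n + S.β n)

/-- A function on the plane descends to the torus iff it is lattice-periodic. -/
def PeriodicOn (S : GudnasonSetting) (u : Plane → ℝ) : Prop :=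
  ∀ x : Plane, ∀ i : Fin 2, u (x + S.v i) = u x

/-- The standing hypotheses on the data of the Gudnason model. -/
structure Valid (S : GudnasonSetting) : Prop where
  indep : LinearIndependent ℝ S.v
  hN : 0 < S.N
  distinct : ∀ i j : Fin S.N, i ≠ j → S.p i ∉ S.orbit (S.p j)
  hm : ∀ i, 0 < S.m i
  h𝔑 : 0 < S.𝔑
  hα : ∀ n, 0 < S.α n
  hβ : ∀ n, 0 < S.β n
  hsum : Tendsto (fun n => S.α n + S.β n) atTop atTop
  hcoup₁ : ∀ n, 0 < (S.β n - S.α n) * (S.α n + S.β n)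
  hcoup₂ : ∀ n, (S.β n - S.α n) * (S.α n + S.β n) ≤ S.𝔑
  area : volume S.fund = 1
  u₀_per : S.PeriodicOn S.u₀
  u₀_smooth : ContDiffOn ℝ 2 S.u₀ S.Zsetᶜ
  u₀_lap : ∀ x ∉ S.Zset, lap S.u₀ x = -(8 * π * S.𝔐)
  u₀_int : (∫ x in S.fund, S.u₀ x) = 0
  u₀_sing : ∀ i, ∃ r > 0, ∃ h : Plane → ℝ,
      ContDiffOn ℝ 2 h (Metric.ball (S.p i) r) ∧
      ∀ x ∈ Metric.ball (S.p i) r, x ≠ S.p i →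
        S.u₀ x = 4 * (S.m i : ℝ) * Real.log ‖x - S.p i‖ + h x

/-- `(u₁, u₂)` is a solution of the Gudnason system at index `n`, where `v₁` is the
`C²` extension of `u₁ - u₀` to the whole torus. -/
structure IsSolution (S : GudnasonSetting) (n : ℕ) (u₁ u₂ v₁ : Plane → ℝ) : Prop where
  per₁ : S.PeriodicOn u₁
  per₂ : S.PeriodicOn u₂
  perv : S.PeriodicOn v₁
  u₂_smooth : ContDiff ℝ 2 u₂
  v₁_smooth : ContDiff ℝ 2 v₁
  v₁_def : ∀ x ∉ S.Zset, u₁ x = S.u₀ x + v₁ x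
  u₁_neg : ∀ x ∉ S.Zset, u₁ x < 0
  u₂_neg : ∀ x, u₂ x < 0
  exp_u₁_zero : ∀ z ∈ S.Zset,
      Tendsto (fun y => Real.exp (u₁ y)) (nhdsWithin z S.Zsetᶜ) (nhds 0)
  eq₁ : ∀ x ∉ S.Zset, lap u₁ x =
      (1 / (S.ε n) ^ 2) * (Real.exp (u₁ x) * (Real.exp (u₁ x) - 1)
        + (S.σ n) ^ 2 * Real.exp (u₂ x) * (Real.exp (u₁ x) - 1)
        - S.σ n * (Real.exp (u₁ x) + Real.exp (u₂ x)) * (Real.exp (u₂ x) - 1))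
  eq₂ : ∀ x ∉ S.Zset, lap u₂ x =
      (1 / (S.ε n) ^ 2) * (Real.exp (u₂ x) * (Real.exp (u₂ x) - 1)
        + (S.σ n) ^ 2 * Real.exp (u₁ x) * (Real.exp (u₂ x) - 1)
        - S.σ n * (Real.exp (u₁ x) + Real.exp (u₂ x)) * (Real.exp (u₁ x) - 1))

end GudnasonSetting

namespace GudnasonAux

open GudnasonSetting Bornology

variable {S : GudnasonSetting}

/-- The basis of the plane given by the two periods. -/
def bS (hS : S.Valid) : Module.Basis (Fin 2) ℝ Plane :=
  basisOfLinearIndependentOfCardEqFinrank hS.indep (by simp)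

lemma bS_coe (hS : S.Valid) : ⇑(bS hS) = S.v :=
  coe_basisOfLinearIndependentOfCardEqFinrank _ _

lemma fund_eq (hS : S.Valid) : S.fund = ZSpan.fundamentalDomain (bS hS) := by
  have hb : ⇑(bS hS) = S.v := bS_coe hS
  ext x
  constructor
  · rintro ⟨⟨s, t⟩, ⟨hs, ht⟩, rfl⟩
    intro i
    show ((bS hS).repr (s • S.v 0 + t • S.v 1)) i ∈ Set.Ico 0 1
    have hx : (s • S.v 0 + t • S.v 1 : Plane) = s • (bS hS) 0 + t • (bS hS) 1 := by rw [hb]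
    rw [hx]
    fin_cases i <;>
      simp [map_add, _root_.map_smul, Module.Basis.repr_self, Finsupp.single_apply] <;>
      first
        | exact hs
        | exact ht
  · intro hx
    refine ⟨(((bS hS).repr x) 0, ((bS hS).repr x) 1), ⟨hx 0, hx 1⟩, ?_⟩
    have h := (bS hS).sum_repr x
    rw [Fin.sum_univ_two] at h
    simpa [hb] using h

lemma lattice_per {F : Type*} [AddCommGroup F] (g : Plane → F)
    (hg : ∀ x i, g (x + S.v i) = g x) :
    ∀ l ∈ Submodule.span ℤ (Set.range S.v), ∀ x : Plane, g (l + x) = g x := by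
  intro l hl
  let H : AddSubgroup Plane :=
    { carrier := {l | ∀ x, g (l + x) = g x}
      zero_mem' := fun x => by rw [zero_add]
      add_mem' := fun {a b} ha hb x => by rw [add_assoc, ha, hb]
      neg_mem' := fun {a} ha x => by
        have h := ha (-a + x)
        rw [← add_assoc, add_neg_cancel, zero_add] at h
        exact h.symm }
  have hle : Submodule.span ℤ (Set.range S.v) ≤ AddSubgroup.toIntSubmodule H := by
    rw [Submodule.span_le]
    rintro _ ⟨i, rfl⟩
    show ∀ x, g (S.v i + x) = g x
    intro x
    rw [add_comm]
    exact hg x i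
  exact hle hl

end GudnasonAux
namespace GudnasonAux

open GudnasonSetting Bornology

variable {S : GudnasonSetting}

lemma exists_bound (hS : S.Valid) {F : Type*} [NormedAddCommGroup F] (g : Plane → F)
    (hc : Continuous g)
    (hper : ∀ l ∈ Submodule.span ℤ (Set.range S.v), ∀ x : Plane, g (l + x) = g x) :
    ∃ M : ℝ, 0 ≤ M ∧ ∀ x, ‖g x‖ ≤ M := by
  have hb : ⇑(bS hS) = S.v := bS_coe hS
  have hK : IsCompact (closure (ZSpan.fundamentalDomain (bS hS))) :=
    (ZSpan.fundamentalDomain_isBounded (bS hS)).isCompact_closure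
  obtain ⟨C, hC⟩ := hK.exists_bound_of_continuousOn hc.continuousOn
  refine ⟨max C 0, le_max_right _ _, fun x => ?_⟩
  obtain ⟨l, hl⟩ := (ZSpan.exist_unique_vadd_mem_fundamentalDomain (bS hS) x).exists
  have hmem : (↑l : Plane) ∈ Submodule.span ℤ (Set.range S.v) := by
    rw [← hb]; exact l.2
  have hlx : g ((↑l : Plane) + x) = g x := hper _ hmem x
  have hvadd : (l +ᵥ x : Plane) = (↑l : Plane) + x := rfl
  calc ‖g x‖ = ‖g ((↑l : Plane) + x)‖ := by rw [hlx]
    _ ≤ C := hC _ (subset_closure (by rw [← hvadd]; exact hl))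
    _ ≤ max C 0 := le_max_left _ _

lemma integral_translate (hS : S.Valid) (g : Plane → ℝ)
    (hper : ∀ l ∈ Submodule.span ℤ (Set.range S.v), ∀ x : Plane, g (l + x) = g x)
    (w : Plane) :
    ∫ x in ZSpan.fundamentalDomain (bS hS), g (x + w) =
      ∫ x in ZSpan.fundamentalDomain (bS hS), g x := by
  have hb : ⇑(bS hS) = S.v := bS_coe hS
  haveI : Countable (Submodule.span ℤ (Set.range ⇑(bS hS))).toAddSubgroup :=
    inferInstanceAs (Countable (Submodule.span ℤ (Set.range ⇑(bS hS))))
  have hD := ZSpan.isAddFundamentalDomain' (bS hS) (volume : Measure Plane)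
  have hT : IsAddFundamentalDomain (Submodule.span ℤ (Set.range ⇑(bS hS))).toAddSubgroup
      ((fun x => x + w) '' ZSpan.fundamentalDomain (bS hS)) volume := by
    have h := hD.image_of_equiv (Equiv.addRight w)
      (by
        have h2 := (measurePreserving_add_right (volume : Measure Plane) (-w)).quasiMeasurePreserving
        have : ⇑(Equiv.addRight w).symm = fun x : Plane => x + (-w) := by
          funext x
          simp [Equiv.addRight, sub_eq_add_neg]
        rw [this]
        exact h2)
      (Equiv.refl _)
      (fun l x => by
        show ((↑l : Plane) + x) + w = (↑l : Plane) + (x + w)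
        rw [add_assoc])
    simpa using h
  have h1 : ∫ y in (fun x => x + w) '' ZSpan.fundamentalDomain (bS hS), g y
      = ∫ x in ZSpan.fundamentalDomain (bS hS), g (x + w) :=
    (measurePreserving_add_right volume w).setIntegral_image_emb
      (measurableEmbedding_addRight w) g _
  rw [← h1]
  exact hT.setIntegral_eq hD (fun l x => hper _ (by rw [← hb]; exact l.2) x)

end GudnasonAux
namespace GudnasonAux

open GudnasonSetting Bornology

variable {S : GudnasonSetting}

lemma fderiv_translate {F : Type*} [NormedAddCommGroup F] [NormedSpace ℝ F]
    (g : Plane → F) (hg : Differentiable ℝ g) (a : Plane)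
    (h : ∀ y, g (y + a) = g y) (x : Plane) :
    fderiv ℝ g (x + a) = fderiv ℝ g x := by
  have hA : HasFDerivAt (fun y : Plane => y + a) (ContinuousLinearMap.id ℝ Plane) x :=
    (hasFDerivAt_id x).add_const a
  have h2 := ((hg (x + a)).hasFDerivAt).comp x hA
  rw [ContinuousLinearMap.comp_id] at h2
  have h3 : (g ∘ fun y : Plane => y + a) = g := funext h
  rw [h3] at h2
  exact (h2.fderiv).symm

lemma hasDerivAt_line {F : Type*} [NormedAddCommGroup F] [NormedSpace ℝ F]
    (g : Plane → F) (hg : Differentiable ℝ g) (x w : Plane) (t : ℝ) :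
    HasDerivAt (fun s : ℝ => g (x + s • w)) (fderiv ℝ g (x + t • w) w) t := by
  have h1 : HasDerivAt (fun s : ℝ => x + s • w) w t := by
    simpa using ((hasDerivAt_id t).smul_const w).const_add x
  exact ((hg (x + t • w)).hasFDerivAt).comp_hasDerivAt t h1

lemma key_integral (hS : S.Valid) (g : Plane → ℝ) (hg : ContDiff ℝ 1 g)
    (hper : ∀ x (i : Fin 2), g (x + S.v i) = g x) (w : Plane) :
    IntegrableOn (fun x => fderiv ℝ g x w) (ZSpan.fundamentalDomain (bS hS)) volume ∧
      ∫ x in ZSpan.fundamentalDomain (bS hS), fderiv ℝ g x w = 0 := by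
  have hdiff : Differentiable ℝ g := hg.differentiable one_ne_zero
  have hlatg := lattice_per (S := S) g hper
  have hfper : ∀ (x : Plane) (i : Fin 2), fderiv ℝ g (x + S.v i) = fderiv ℝ g x :=
    fun x i => fderiv_translate g hdiff (S.v i) (fun y => hper y i) x
  have hlatf := lattice_per (S := S) (fderiv ℝ g) hfper
  obtain ⟨M, hM0, hM⟩ := exists_bound hS (fderiv ℝ g) (hg.continuous_fderiv one_ne_zero) hlatf
  obtain ⟨Mg, hMg0, hMg⟩ := exists_bound hS g hg.continuous hlatg
  set D := ZSpan.fundamentalDomain (bS hS) with hDdef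
  have hDfin : volume D < ⊤ :=
    (ZSpan.fundamentalDomain_isBounded (bS hS)).measure_lt_top
  haveI : Fact (volume D < ⊤) := ⟨hDfin⟩
  have hline : ∀ (x : Plane) (t : ℝ),
      HasDerivAt (fun s : ℝ => g (x + s • w)) (fderiv ℝ g (x + t • w) w) t :=
    fun x t => hasDerivAt_line g hdiff x w t
  have hLip : ∀ x : Plane,
      LipschitzWith (Real.nnabs (M * ‖w‖)) (fun t : ℝ => g (x + t • w)) := by
    intro x
    apply lipschitzWith_of_nnnorm_deriv_le (fun t => (hline x t).differentiableAt)
    intro t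
    rw [(hline x t).deriv]
    rw [← NNReal.coe_le_coe]
    have h1 : ‖fderiv ℝ g (x + t • w) w‖ ≤ M * ‖w‖ := by
      calc ‖fderiv ℝ g (x + t • w) w‖ ≤ ‖fderiv ℝ g (x + t • w)‖ * ‖w‖ :=
            (fderiv ℝ g (x + t • w)).le_opNorm w
        _ ≤ M * ‖w‖ := by
            apply mul_le_mul_of_nonneg_right (hM _) (norm_nonneg _)
    rw [coe_nnnorm, Real.coe_nnabs, abs_of_nonneg (mul_nonneg hM0 (norm_nonneg w))]
    exact h1
  have hcont : ∀ t : ℝ, Continuous (fun x : Plane => g (x + t • w)) :=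
    fun t => hg.continuous.comp (continuous_id.add continuous_const)
  have hint : ∀ t : ℝ, Integrable (fun x => g (x + t • w)) (volume.restrict D) := by
    intro t
    refine Integrable.mono' (integrable_const Mg) (hcont t).aestronglyMeasurable ?_
    exact Filter.Eventually.of_forall fun x => hMg _
  have hmain := hasDerivAt_integral_of_dominated_loc_of_lip
    (F := fun (t : ℝ) (x : Plane) => g (x + t • w))
    (F' := fun x : Plane => fderiv ℝ g x w) (x₀ := (0 : ℝ))
    (bound := fun _ : Plane => M * ‖w‖) (μ := volume.restrict D)
    (Metric.ball_mem_nhds (0 : ℝ) zero_lt_one)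
    (Filter.Eventually.of_forall fun t => (hcont t).aestronglyMeasurable)
    (hint 0)
    (((hg.continuous_fderiv one_ne_zero).clm_apply continuous_const).aestronglyMeasurable)
    (Filter.Eventually.of_forall fun x => ((hLip x).lipschitzOnWith))
    (integrable_const _)
    (Filter.Eventually.of_forall fun x => by simpa using hline x 0)
  have hconst : (fun t : ℝ => ∫ x in D, g (x + t • w)) = fun _ : ℝ => ∫ x in D, g x := by
    funext t
    exact integral_translate hS g hlatg (t • w)
  have h0 : HasDerivAt (fun t : ℝ => ∫ x in D, g (x + t • w)) 0 0 := by
    rw [hconst]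
    exact hasDerivAt_const _ _
  exact ⟨hmain.1, (hmain.2.unique h0)⟩

end GudnasonAux
namespace GudnasonAux

open GudnasonSetting Bornology

variable {S : GudnasonSetting}

lemma contDiff_fderiv_apply (u : Plane → ℝ) (hu : ContDiff ℝ 2 u) (v : Plane) :
    ContDiff ℝ 1 (fun y => fderiv ℝ u y v) := by
  have h1 : ContDiff ℝ 1 (fderiv ℝ u) := hu.fderiv_right (by norm_num)
  exact (ContinuousLinearMap.apply ℝ ℝ v).contDiff.comp h1

lemma dirDeriv2_eq (u : Plane → ℝ) (hu : ContDiff ℝ 2 u) (v x : Plane) :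
    dirDeriv2 u v x = fderiv ℝ (fun y => fderiv ℝ u y v) x v := by
  have hud : Differentiable ℝ u := hu.differentiable (by norm_num)
  have hG : ContDiff ℝ 1 (fun y => fderiv ℝ u y v) := contDiff_fderiv_apply u hu v
  have hGd : Differentiable ℝ (fun y => fderiv ℝ u y v) := hG.differentiable one_ne_zero
  have hinner : (fun t : ℝ => deriv (fun s : ℝ => u (x + s • v)) t)
      = fun t : ℝ => fderiv ℝ u (x + t • v) v := by
    funext t
    exact (hasDerivAt_line u hud x v t).deriv
  rw [dirDeriv2, hinner]
  have h2 := (hasDerivAt_line (fun y => fderiv ℝ u y v) hGd x v 0).deriv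
  rw [h2]
  norm_num

lemma lap_eq (u : Plane → ℝ) (hu : ContDiff ℝ 2 u) :
    lap u = fun x => ∑ i : Fin 2,
      fderiv ℝ (fun y => fderiv ℝ u y (EuclideanSpace.single i 1)) x
        (EuclideanSpace.single i 1) := by
  funext x
  rw [lap]
  exact Finset.sum_congr rfl fun i _ => dirDeriv2_eq u hu _ x

lemma integral_lap_eq_zero (hS : S.Valid) (u : Plane → ℝ) (hu : ContDiff ℝ 2 u)
    (hper : S.PeriodicOn u) :
    IntegrableOn (lap u) (ZSpan.fundamentalDomain (bS hS)) volume ∧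
      ∫ x in ZSpan.fundamentalDomain (bS hS), lap u x = 0 := by
  have hud : Differentiable ℝ u := hu.differentiable (by norm_num)
  have hGper : ∀ (v : Plane) (x : Plane) (i : Fin 2),
      (fun y => fderiv ℝ u y v) (x + S.v i) = fderiv ℝ u x v := by
    intro v x i
    show fderiv ℝ u (x + S.v i) v = fderiv ℝ u x v
    rw [fderiv_translate u hud (S.v i) (fun y => hper y i) x]
  have hkey := fun i : Fin 2 =>
    key_integral hS _ (contDiff_fderiv_apply u hu (EuclideanSpace.single i 1))
      (fun x j => hGper (EuclideanSpace.single i 1) x j) (EuclideanSpace.single i 1)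
  rw [lap_eq u hu]
  constructor
  · exact integrable_finset_sum _ fun i _ => (hkey i).1
  · rw [integral_finset_sum _ fun i _ => (hkey i).1]
    simp only [fun i : Fin 2 => (hkey i).2]
    simp

lemma Zset_countable (S : GudnasonSetting) : S.Zset.Countable := by
  refine Set.countable_iUnion fun i => ?_
  have : S.orbit (S.p i) = Set.range
      (fun k : Fin 2 → ℤ => S.p i + (k 0 : ℝ) • S.v 0 + (k 1 : ℝ) • S.v 1) := by
    ext x
    simp only [orbit, Set.mem_setOf_eq, Set.mem_range]
    exact ⟨fun ⟨k, hk⟩ => ⟨k, hk.symm⟩, fun ⟨k, hk⟩ => ⟨k, hk.symm⟩⟩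
  rw [this]
  exact Set.countable_range _

end GudnasonAux
open GudnasonAux in
set_option maxHeartbeats 1600000 in
open GudnasonSetting in
/-- The uniform `L¹` bound for the second nonlinear term (recall `|𝕋| = 1`). -/
theorem statement2 (S : GudnasonSetting) (hS : S.Valid) (n : ℕ)
    (u₁ u₂ v₁ : Plane → ℝ) (hsol : S.IsSolution n u₁ u₂ v₁) :
    (∫ x in S.fund, (1 / (S.ε n) ^ 2) * Real.exp (u₂ x) * (1 - Real.exp (u₂ x))) ≤
        2 * S.𝔑 ∧
    (∫ x in S.fund, (1 / (S.ε n) ^ 2) * Real.exp (u₂ x) * (1 - Real.exp (u₂ x))) =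
      ∫ x in S.fund, (1 / (S.ε n) ^ 2) * Real.exp (u₂ x) * |1 - Real.exp (u₂ x)| := by
  have habs : ∀ x : Plane, |1 - Real.exp (u₂ x)| = 1 - Real.exp (u₂ x) := fun x =>
    abs_of_nonneg (by
      have h1 : Real.exp (u₂ x) < 1 := Real.exp_lt_one_iff.mpr (hsol.u₂_neg x)
      linarith)
  refine ⟨?_, integral_congr_ae (Filter.Eventually.of_forall fun x => by beta_reduce; rw [habs x])⟩
  set s := S.α n + S.β n with hsdef
  set d := S.β n - S.α n with hddef
  have hs : 0 < s := add_pos (hS.hα n) (hS.hβ n)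
  have hd : 0 < d := by
    by_contra h
    push_neg at h
    nlinarith [hS.hcoup₁ n]
  have hds : d * s ≤ S.𝔑 := hS.hcoup₂ n
  have hσdef : S.σ n = d / s := rfl
  have hE : (1 : ℝ) / (S.ε n) ^ 2 = s ^ 2 := by
    show (1 : ℝ) / (1 / s) ^ 2 = s ^ 2
    field_simp
  have hb := fund_eq hS
  have hlap := integral_lap_eq_zero hS u₂ hsol.u₂_smooth hsol.per₂
  rw [← hb] at hlap
  have hZ : volume S.Zset = 0 := (Zset_countable S).measure_zero _
  have hZae : ∀ᵐ x : Plane, x ∉ S.Zset := measure_eq_zero_iff_ae_notMem.mp hZ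
  have hpt : ∀ x ∉ S.Zset,
      (1 / (S.ε n) ^ 2) * Real.exp (u₂ x) * (1 - Real.exp (u₂ x))
        ≤ -lap u₂ x + 2 * S.𝔑 := by
    intro x hx
    have hlx := hsol.eq₂ x hx
    set a := Real.exp (u₁ x) with hadef
    set c := Real.exp (u₂ x) with hcdef
    have ha0 : 0 < a := Real.exp_pos _
    have ha1 : a < 1 := Real.exp_lt_one_iff.mpr (hsol.u₁_neg x hx)
    have hc0 : 0 < c := Real.exp_pos _
    have hc1 : c < 1 := Real.exp_lt_one_iff.mpr (hsol.u₂_neg x)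
    have hds0 : 0 < d * s := mul_pos hd hs
    have f1 : (a + c) * (1 - a) ≤ 2 := by nlinarith
    have f3 : a * (c - 1) ≤ 0 := by nlinarith
    have g1 : d ^ 2 * (a * (c - 1)) ≤ 0 := by nlinarith [sq_nonneg d]
    have g2 : d * s * ((a + c) * (1 - a)) ≤ d * s * 2 := by
      apply mul_le_mul_of_nonneg_left f1 hds0.le
    have hkey : s ^ 2 * ((d / s) ^ 2 * a * (c - 1))
        - s ^ 2 * ((d / s) * ((a + c) * (a - 1))) ≤ 2 * S.𝔑 := by
      have e1 : s ^ 2 * ((d / s) ^ 2 * a * (c - 1)) = d ^ 2 * (a * (c - 1)) := by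
        field_simp
      have e2 : s ^ 2 * ((d / s) * ((a + c) * (a - 1))) = -(d * s * ((a + c) * (1 - a))) := by
        field_simp
        ring
      rw [e1, e2]
      nlinarith [g1, g2, hds, hds0]
    have heq : (1 / (S.ε n) ^ 2) * c * (1 - c) + lap u₂ x
        = s ^ 2 * ((d / s) ^ 2 * a * (c - 1))
          - s ^ 2 * ((d / s) * ((a + c) * (a - 1))) := by
      rw [hlx, hσdef, hE]
      ring
    linarith [hkey, heq]
  have hfin : volume S.fund < ⊤ := by rw [hS.area]; exact ENNReal.one_lt_top
  haveI : Fact (volume S.fund < ⊤) := ⟨hfin⟩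
  have hc2 : Continuous u₂ := hsol.u₂_smooth.continuous
  have hTcont : Continuous (fun x : Plane =>
      (1 / (S.ε n) ^ 2) * Real.exp (u₂ x) * (1 - Real.exp (u₂ x))) := by fun_prop
  have hTint : IntegrableOn (fun x : Plane =>
      (1 / (S.ε n) ^ 2) * Real.exp (u₂ x) * (1 - Real.exp (u₂ x))) S.fund volume := by
    refine Integrable.mono' (integrable_const (s ^ 2)) hTcont.aestronglyMeasurable ?_
    refine Filter.Eventually.of_forall fun x => ?_
    have hc0 : 0 < Real.exp (u₂ x) := Real.exp_pos _
    have hc1 : Real.exp (u₂ x) < 1 := Real.exp_lt_one_iff.mpr (hsol.u₂_neg x)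
    have h5 : 0 ≤ s ^ 2 * (1 - Real.exp (u₂ x) * (1 - Real.exp (u₂ x))) :=
      mul_nonneg (sq_nonneg s) (by nlinarith)
    rw [Real.norm_eq_abs, hE, abs_of_nonneg
      (mul_nonneg (mul_nonneg (sq_nonneg s) hc0.le) (by linarith))]
    nlinarith [h5]
  have hcint : IntegrableOn (fun _ : Plane => 2 * S.𝔑) S.fund volume :=
    integrableOn_const hfin.ne
  have hRint : IntegrableOn (fun x : Plane => -lap u₂ x + 2 * S.𝔑) S.fund volume :=
    (hlap.1.neg).add hcint
  have hle := integral_mono_ae hTint hRint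
    (ae_restrict_of_ae (hZae.mono fun x hx => hpt x hx))
  have hnint : IntegrableOn (fun x : Plane => -lap u₂ x) S.fund volume := hlap.1.neg
  have hR : ∫ x in S.fund, (-lap u₂ x + 2 * S.𝔑) = 2 * S.𝔑 := by
    have hsplit : ∫ x in S.fund, (-lap u₂ x + 2 * S.𝔑)
        = (∫ x in S.fund, -lap u₂ x) + ∫ _x in S.fund, (2 * S.𝔑 : ℝ) :=
      integral_add hnint hcint
    have hneg : ∫ x in S.fund, -lap u₂ x = -∫ x in S.fund, lap u₂ x := integral_neg _
    rw [hsplit, hneg, hlap.2, setIntegral_const, measureReal_def, hS.area]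
    simp
  rw [hR] at hle
  exact hle
end
end

section
/- Let (u₁ₙ, u₂ₙ) be a sequence of solutions of the Gudnason system and suppose there is ν₀ > 0 with sup_{𝕋∖Z} u₁ₙ ≤ −ν₀ for all n. Then for all sufficiently large n, 4π𝔐 ≤ ∫_𝕋 e^{w₁ₙ} dx ≤ 2(𝔑 + 8π𝔐)/(1 − e^{−ν₀}), where w₁ₙ := u₁ₙ − 2 ln εₙ. -/
open MeasureTheory Real Filter

noncomputable section

section AuxMachinery

example : Module.finrank ℝ Plane = 2 := finrank_euclideanSpace_fin

variable {v : Fin 2 → Plane} (hv : LinearIndependent ℝ v)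

noncomputable def Gbasis (hv : LinearIndependent ℝ v) : Module.Basis (Fin 2) ℝ Plane :=
  basisOfLinearIndependentOfCardEqFinrank hv (by simp [finrank_euclideanSpace_fin])

lemma Gbasis_apply (i : Fin 2) : Gbasis hv i = v i := by
  simp [Gbasis, coe_basisOfLinearIndependentOfCardEqFinrank]

lemma Gbasis_coe : ⇑(Gbasis hv) = v := funext (Gbasis_apply hv)

lemma mem_lat (x : Plane) :
    x ∈ Submodule.span ℤ (Set.range ⇑(Gbasis hv)) ↔
      ∃ k : Fin 2 → ℤ, x = (k 0 : ℝ) • v 0 + (k 1 : ℝ) • v 1 := by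
  rw [Gbasis_coe hv]
  have h2 : Set.range v = {v 0, v 1} := by
    ext y; constructor
    · rintro ⟨i, rfl⟩; fin_cases i <;> simp
    · rintro (rfl | rfl) <;> [exact ⟨0, rfl⟩; exact ⟨1, rfl⟩]
  rw [h2, Submodule.mem_span_pair]
  constructor
  · rintro ⟨a, b, rfl⟩
    exact ⟨![a, b], by push_cast [← Int.cast_smul_eq_zsmul ℝ]; simp⟩
  · rintro ⟨k, rfl⟩
    exact ⟨k 0, k 1, by push_cast [← Int.cast_smul_eq_zsmul ℝ]; simp⟩

lemma fund_eq_aux :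
    ((fun st : ℝ × ℝ => st.1 • v 0 + st.2 • v 1) '' (Set.Ico (0:ℝ) 1 ×ˢ Set.Ico (0:ℝ) 1)) =
      ZSpan.fundamentalDomain (Gbasis hv) := by
  ext x
  constructor
  · rintro ⟨⟨s, t⟩, ⟨hs, ht⟩, rfl⟩
    intro i
    have : (Gbasis hv).repr (s • v 0 + t • v 1) i
        = s * ((Gbasis hv).repr (v 0) i) + t * ((Gbasis hv).repr (v 1) i) := by
      simp [map_add, _root_.map_smul]
    rw [this]
    have h0 : (Gbasis hv).repr (v 0) = Finsupp.single 0 1 := by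
      rw [← Gbasis_apply hv 0]; exact (Gbasis hv).repr_self 0
    have h1 : (Gbasis hv).repr (v 1) = Finsupp.single 1 1 := by
      rw [← Gbasis_apply hv 1]; exact (Gbasis hv).repr_self 1
    fin_cases i <;> simp [h0, h1, hs.1, hs.2, ht.1, ht.2, Finsupp.single_apply]
  · intro hx
    refine ⟨((Gbasis hv).repr x 0, (Gbasis hv).repr x 1), ⟨hx 0, hx 1⟩, ?_⟩
    have := (Gbasis hv).sum_repr x
    rw [Fin.sum_univ_two] at this
    simp only [Gbasis_apply hv] at this
    simpa using this

section Lattice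
variable (b : Module.Basis (Fin 2) ℝ Plane)

abbrev GLat : AddSubgroup Plane := (Submodule.span ℤ (Set.range ⇑b)).toAddSubgroup

lemma isFund : IsAddFundamentalDomain (GLat b) (ZSpan.fundamentalDomain b) volume :=
  ZSpan.isAddFundamentalDomain' b volume

instance : Countable (GLat b) :=
  inferInstanceAs (Countable (Submodule.span ℤ (Set.range ⇑b)))

lemma isFund_translate (c : Plane) :
    IsAddFundamentalDomain (GLat b) ((· + c) '' (ZSpan.fundamentalDomain b)) volume := by
  refine (isFund b).image_of_equiv (Equiv.addRight c)
    ?_ (Equiv.refl _) ?_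
  · exact (measurePreserving_add_right volume (-c)).quasiMeasurePreserving
  · intro g x
    simp [Equiv.addRight, AddSubgroup.vadd_def]
    abel

lemma setIntegral_translate {ψ : Plane → ℝ}
    (hinv : ∀ g : GLat b, ∀ x, ψ (↑g + x) = ψ x) (c : Plane) :
    ∫ x in ZSpan.fundamentalDomain b, ψ (x + c) = ∫ x in ZSpan.fundamentalDomain b, ψ x := by
  have h1 : ∫ x in (· + c) '' (ZSpan.fundamentalDomain b), ψ x
      = ∫ x in ZSpan.fundamentalDomain b,
          |(ContinuousLinearMap.id ℝ Plane).det| • ψ (x + c) := by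
    refine integral_image_eq_integral_abs_det_fderiv_smul volume
      (ZSpan.fundamentalDomain_measurableSet b) (fun x _ => ?_) ?_ ψ
    · exact ((hasFDerivAt_id x).add_const c).hasFDerivWithinAt
    · exact (add_left_injective c).injOn
  have h2 : ∫ x in (· + c) '' (ZSpan.fundamentalDomain b), ψ x
      = ∫ x in ZSpan.fundamentalDomain b, ψ x := by
    refine (isFund_translate b c).setIntegral_eq (isFund b) ?_
    intro g x
    rw [AddSubgroup.vadd_def]
    exact hinv g x
  rw [← h2, h1]
  simp [ContinuousLinearMap.det]

section Calc

lemma hasDerivAt_lineParam (x w : Plane) (t : ℝ) :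
    HasDerivAt (fun s : ℝ => x + s • w) w t := by
  simpa using ((hasDerivAt_id t).smul_const w).const_add x

variable {U : Set Plane} {φ a c : Plane → ℝ} {x w : Plane}

lemma hasDerivAt_line (hU : IsOpen U) (hφ : ContDiffOn ℝ 2 φ U) {t : ℝ}
    (ht : x + t • w ∈ U) :
    HasDerivAt (fun s : ℝ => φ (x + s • w)) (fderiv ℝ φ (x + t • w) w) t := by
  have h1 : HasFDerivAt φ (fderiv ℝ φ (x + t • w)) (x + t • w) :=
    ((hφ.contDiffAt (hU.mem_nhds ht)).differentiableAt (by norm_num)).hasFDerivAt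
  exact h1.comp_hasDerivAt t (hasDerivAt_lineParam x w t)

lemma hasDerivAt_outer (hU : IsOpen U) (hφ : ContDiffOn ℝ 2 φ U) (hx : x ∈ U) :
    HasDerivAt (fun t : ℝ => deriv (fun s : ℝ => φ (x + s • w)) t)
      (fderiv ℝ (fun y => fderiv ℝ φ y w) x w) 0 := by
  have hA : IsOpen {t : ℝ | x + t • w ∈ U} :=
    hU.preimage (by continuity)
  have h0 : (0:ℝ) ∈ {t : ℝ | x + t • w ∈ U} := by simpa using hx
  have hD : DifferentiableOn ℝ (fun y => fderiv ℝ φ y w) U := by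
    have := (hφ.fderiv_of_isOpen hU (le_refl 2) : ContDiffOn ℝ 1 (fderiv ℝ φ) U)
    exact (this.clm_apply contDiffOn_const).differentiableOn one_ne_zero
  have hDd : HasDerivAt (fun t : ℝ => fderiv ℝ φ (x + t • w) w)
      (fderiv ℝ (fun y => fderiv ℝ φ y w) x w) 0 := by
    have h1 : HasFDerivAt (fun y => fderiv ℝ φ y w)
        (fderiv ℝ (fun y => fderiv ℝ φ y w) x) x :=
      ((hD.differentiableAt (hU.mem_nhds hx))).hasFDerivAt
    have h1' : HasFDerivAt (fun y => fderiv ℝ φ y w)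
        (fderiv ℝ (fun y => fderiv ℝ φ y w) x) (x + (0:ℝ) • w) := by simpa using h1
    exact h1'.comp_hasDerivAt 0 (hasDerivAt_lineParam x w 0)
  have heq : (fun t : ℝ => deriv (fun s : ℝ => φ (x + s • w)) t)
      =ᶠ[nhds 0] (fun t : ℝ => fderiv ℝ φ (x + t • w) w) := by
    filter_upwards [hA.mem_nhds h0] with t ht
    exact (hasDerivAt_line hU hφ ht).deriv
  exact hDd.congr_of_eventuallyEq heq

lemma dirDeriv2_eq (hU : IsOpen U) (hφ : ContDiffOn ℝ 2 φ U) (hx : x ∈ U) :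
    dirDeriv2 φ w x = fderiv ℝ (fun y => fderiv ℝ φ y w) x w :=
  (hasDerivAt_outer hU hφ hx).deriv

lemma dirDeriv2_congr {u u' : Plane → ℝ} (hU : IsOpen U) (hx : x ∈ U)
    (h : ∀ y ∈ U, u y = u' y) : dirDeriv2 u w x = dirDeriv2 u' w x := by
  have hA : IsOpen {t : ℝ | x + t • w ∈ U} := hU.preimage (by continuity)
  have h0 : (0:ℝ) ∈ {t : ℝ | x + t • w ∈ U} := by simpa using hx
  unfold dirDeriv2
  apply Filter.EventuallyEq.deriv_eq
  filter_upwards [hA.mem_nhds h0] with t ht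
  apply Filter.EventuallyEq.deriv_eq
  filter_upwards [hA.mem_nhds ht] with s hs
  exact h _ hs

lemma dirDeriv2_add (hU : IsOpen U) (ha : ContDiffOn ℝ 2 a U) (hc : ContDiffOn ℝ 2 c U)
    (hx : x ∈ U) :
    dirDeriv2 (fun y => a y + c y) w x = dirDeriv2 a w x + dirDeriv2 c w x := by
  have hA : IsOpen {t : ℝ | x + t • w ∈ U} := hU.preimage (by continuity)
  have h0 : (0:ℝ) ∈ {t : ℝ | x + t • w ∈ U} := by simpa using hx
  have Ha := hasDerivAt_outer (w := w) hU ha hx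
  have Hc := hasDerivAt_outer (w := w) hU hc hx
  have heq : (fun t : ℝ => deriv (fun s : ℝ => a (x + s • w) + c (x + s • w)) t)
      =ᶠ[nhds 0] (fun t : ℝ => deriv (fun s : ℝ => a (x + s • w)) t
        + deriv (fun s : ℝ => c (x + s • w)) t) := by
    filter_upwards [hA.mem_nhds h0] with t ht
    exact deriv_add (hasDerivAt_line hU ha ht).differentiableAt
      (hasDerivAt_line hU hc ht).differentiableAt
  have : HasDerivAt (fun t : ℝ => deriv (fun s : ℝ => a (x + s • w) + c (x + s • w)) t)
      (fderiv ℝ (fun y => fderiv ℝ a y w) x w + fderiv ℝ (fun y => fderiv ℝ c y w) x w) 0 :=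
    (Ha.add Hc).congr_of_eventuallyEq heq
  rw [dirDeriv2, this.deriv, dirDeriv2_eq hU ha hx, dirDeriv2_eq hU hc hx]

lemma lap_add_of_eqOn {u : Plane → ℝ} (hU : IsOpen U) (ha : ContDiffOn ℝ 2 a U)
    (hc : ContDiffOn ℝ 2 c U) (hx : x ∈ U) (h : ∀ y ∈ U, u y = a y + c y) :
    lap u x = lap a x + lap c x := by
  unfold lap
  rw [← Finset.sum_add_distrib]
  refine Finset.sum_congr rfl fun i _ => ?_
  rw [dirDeriv2_congr hU hx h, dirDeriv2_add hU ha hc hx]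

lemma fderiv_shift (φ : Plane → ℝ) (hφ : Differentiable ℝ φ) (cc x : Plane) :
    fderiv ℝ (fun y => φ (y + cc)) x = fderiv ℝ φ (x + cc) := by
  have h1 : HasFDerivAt φ (fderiv ℝ φ (x + cc)) (x + cc) := (hφ (x + cc)).hasFDerivAt
  have h2 : HasFDerivAt (fun y : Plane => y + cc) (ContinuousLinearMap.id ℝ Plane) x :=
    (hasFDerivAt_id x).add_const cc
  have := h1.comp x h2
  exact this.fderiv

lemma fderiv_periodic_point (φ : Plane → ℝ) (hφ : Differentiable ℝ φ) {u : Plane}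
    (h : ∀ y, φ (y + u) = φ y) (x : Plane) :
    fderiv ℝ φ (x + u) = fderiv ℝ φ x := by
  rw [← fderiv_shift φ hφ u x]
  congr 1
  exact funext h

lemma per_zsmul {W : Type*} {ψ : Plane → W} {u : Plane} (h : ∀ y, ψ (y + u) = ψ y) :
    ∀ (k : ℤ) (x : Plane), ψ (x + (k : ℝ) • u) = ψ x := by
  intro k
  induction k using Int.induction_on with
  | zero => simp
  | succ n ih =>
    intro x
    have h1 : x + ((n : ℝ) + 1) • u = (x + u) + (n : ℝ) • u := by
      rw [add_smul, one_smul]; abel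
    push_cast
    push_cast at ih
    rw [h1, ih (x + u), h x]
  | pred n ih =>
    intro x
    have h1 : x + (-(n : ℝ) - 1) • u = (x - u) + (-(n : ℝ)) • u := by
      rw [sub_smul, one_smul]; abel
    push_cast
    push_cast at ih
    rw [h1, ih (x - u), ← h (x - u), sub_add_cancel]

lemma periodic_lat {W : Type*} {ψ : Plane → W} (hv : LinearIndependent ℝ v)
    (h : ∀ (x : Plane) (i : Fin 2), ψ (x + v i) = ψ x) :
    ∀ g : GLat (Gbasis hv), ∀ x : Plane, ψ (↑g + x) = ψ x := by
  rintro ⟨g, hg⟩ x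
  rw [Submodule.mem_toAddSubgroup, mem_lat hv] at hg
  obtain ⟨k, rfl⟩ := hg
  have h0 : ∀ x, ψ (x + v 0) = ψ x := fun x => h x 0
  have h1 : ∀ x, ψ (x + v 1) = ψ x := fun x => h x 1
  have : (k 0 : ℝ) • v 0 + (k 1 : ℝ) • v 1 + x
      = x + (k 0 : ℝ) • v 0 + (k 1 : ℝ) • v 1 := by abel
  rw [AddSubgroup.coe_mk] at *
  simp only [this]
  rw [add_assoc, add_comm ((k 0 : ℝ) • v 0), ← add_assoc,
    per_zsmul h0 (k 0), per_zsmul h1 (k 1)]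

lemma exists_bound {W : Type*} [NormedAddCommGroup W] (b : Module.Basis (Fin 2) ℝ Plane)
    {ψ : Plane → W} (hc : Continuous ψ)
    (hper : ∀ g : GLat b, ∀ x : Plane, ψ (↑g + x) = ψ x) :
    ∃ C : ℝ, ∀ x : Plane, ‖ψ x‖ ≤ C := by
  have hK : IsCompact (parallelepiped ⇑b) := by
    have : parallelepiped ⇑b = (fun t : Fin 2 → ℝ => ∑ i, t i • b i) '' (Set.Icc 0 1) :=
      rfl
    rw [this]
    exact (isCompact_Icc).image (by continuity)
  obtain ⟨C, hC⟩ := hK.exists_bound_of_continuousOn hc.continuousOn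
  refine ⟨C, fun x => ?_⟩
  obtain ⟨g, hg, -⟩ := ZSpan.exist_unique_vadd_mem_fundamentalDomain b x
  have hmem : (↑g + x) ∈ parallelepiped ⇑b :=
    ZSpan.fundamentalDomain_subset_parallelepiped b hg
  calc ‖ψ x‖ = ‖ψ (↑g + x)‖ := by rw [hper ⟨g, g.2⟩ x]
  _ ≤ C := hC _ hmem

lemma parallelepiped_compact (b : Module.Basis (Fin 2) ℝ Plane) : IsCompact (parallelepiped ⇑b) := by
  have : parallelepiped ⇑b = (fun t : Fin 2 → ℝ => ∑ i, t i • b i) '' (Set.Icc 0 1) := rfl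
  rw [this]
  exact (isCompact_Icc).image (by continuity)

lemma fund_volume_lt_top (b : Module.Basis (Fin 2) ℝ Plane) :
    volume (ZSpan.fundamentalDomain b) < ⊤ :=
  lt_of_le_of_lt (measure_mono (ZSpan.fundamentalDomain_subset_parallelepiped b))
    (parallelepiped_compact b).measure_lt_top

lemma integrable_of_bdd {μ : Measure Plane} [IsFiniteMeasure μ] {h : Plane → ℝ}
    (hm : AEStronglyMeasurable h μ) {C : ℝ} (hb : ∀ᵐ x ∂μ, ‖h x‖ ≤ C) : Integrable h μ :=
  ⟨hm, HasFiniteIntegral.of_bounded hb⟩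

lemma integral_fderiv_zero (b : Module.Basis (Fin 2) ℝ Plane) {ψ : Plane → ℝ} (hψ : ContDiff ℝ 1 ψ)
    (hper : ∀ g : GLat b, ∀ x : Plane, ψ (↑g + x) = ψ x) (w : Plane) :
    ∫ x in ZSpan.fundamentalDomain b, fderiv ℝ ψ x w = 0 := by
  set F := ZSpan.fundamentalDomain b with hF
  haveI : IsFiniteMeasure (volume.restrict F) :=
    ⟨by rw [Measure.restrict_apply_univ]; exact fund_volume_lt_top b⟩
  have hdiff : Differentiable ℝ ψ := hψ.differentiable one_ne_zero
  have hfc : Continuous (fderiv ℝ ψ) := hψ.continuous_fderiv one_ne_zero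
  have hfper : ∀ g : GLat b, ∀ x : Plane, fderiv ℝ ψ (↑g + x) = fderiv ℝ ψ x := by
    intro g x
    rw [add_comm]
    exact fderiv_periodic_point ψ hdiff (fun y => by rw [add_comm]; exact hper g y) x
  obtain ⟨C, hC⟩ := exists_bound b hfc hfper
  have key := hasDerivAt_integral_of_dominated_loc_of_deriv_le
    (μ := volume.restrict F) (F := fun t x => ψ (x + t • w))
    (F' := fun t x => fderiv ℝ ψ (x + t • w) w) (x₀ := (0:ℝ))
    (bound := fun _ => C * ‖w‖) (s := Metric.ball 0 1) (Metric.ball_mem_nhds _ zero_lt_one)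
    (Eventually.of_forall fun t =>
      (hψ.continuous.comp (by continuity)).aestronglyMeasurable)
    ?_ ?_ ?_ ?_ ?_
  · have key2 := key.2
    have hconst : (fun t : ℝ => ∫ x, ψ (x + t • w) ∂(volume.restrict F))
        = fun _ => ∫ x, ψ x ∂(volume.restrict F) :=
      funext fun t => setIntegral_translate b hper (t • w)
    rw [hconst] at key2
    have h0 : HasDerivAt (fun _ : ℝ => ∫ x, ψ x ∂(volume.restrict F)) 0 0 :=
      hasDerivAt_const _ _
    have := key2.unique h0
    simpa using this
  · exact integrable_of_bdd
      ((hψ.continuous.comp (by continuity : Continuous fun x : Plane => x + (0:ℝ) • w)).aestronglyMeasurable)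
      (hb := Eventually.of_forall fun x =>
        (exists_bound b hψ.continuous hper).choose_spec (x + (0:ℝ) • w))
  · exact ((hfc.comp (by continuity : Continuous fun x : Plane => x + (0:ℝ) • w)).clm_apply
      continuous_const).aestronglyMeasurable
  · refine Eventually.of_forall fun x => fun t _ => ?_
    calc ‖fderiv ℝ ψ (x + t • w) w‖ ≤ ‖fderiv ℝ ψ (x + t • w)‖ * ‖w‖ :=
          ContinuousLinearMap.le_opNorm _ _
    _ ≤ C * ‖w‖ := mul_le_mul_of_nonneg_right (hC _) (norm_nonneg w)
  · exact integrable_const _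
  · refine Eventually.of_forall fun x => fun t _ => ?_
    exact (hdiff (x + t • w)).hasFDerivAt.comp_hasDerivAt t (hasDerivAt_lineParam x w t)

lemma integral_lap_zero (b : Module.Basis (Fin 2) ℝ Plane) {φ : Plane → ℝ} (hφ : ContDiff ℝ 2 φ)
    (hper : ∀ g : GLat b, ∀ x : Plane, φ (↑g + x) = φ x) :
    ∫ x in ZSpan.fundamentalDomain b, lap φ x = 0 := by
  have hφO : ContDiffOn ℝ 2 φ Set.univ := hφ.contDiffOn
  have hdiff : Differentiable ℝ φ := hφ.differentiable two_ne_zero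
  have hD : ∀ w : Plane, ContDiff ℝ 1 (fun y => fderiv ℝ φ y w) := fun w =>
    (hφ.fderiv_right (by norm_num)).clm_apply contDiff_const
  have hDper : ∀ (w : Plane) (g : GLat b) (x : Plane),
      fderiv ℝ φ (↑g + x) w = fderiv ℝ φ x w := by
    intro w g x
    rw [add_comm,
      fderiv_periodic_point φ hdiff (fun y => by rw [add_comm]; exact hper g y) x]
  have hlap : ∀ x : Plane, lap φ x = ∑ i : Fin 2,
      fderiv ℝ (fun y => fderiv ℝ φ y (EuclideanSpace.single i 1)) x
        (EuclideanSpace.single i 1) := fun x =>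
    Finset.sum_congr rfl fun i _ => dirDeriv2_eq isOpen_univ hφO (Set.mem_univ x)
  haveI : IsFiniteMeasure (volume.restrict (ZSpan.fundamentalDomain b)) :=
    ⟨by rw [Measure.restrict_apply_univ]; exact fund_volume_lt_top b⟩
  have hint : ∀ w : Plane, Integrable (fun x => fderiv ℝ (fun y => fderiv ℝ φ y w) x w)
      (volume.restrict (ZSpan.fundamentalDomain b)) := by
    intro w
    have hc : Continuous (fderiv ℝ (fun y => fderiv ℝ φ y w)) :=
      (hD w).continuous_fderiv one_ne_zero
    have hp : ∀ g : GLat b, ∀ x : Plane,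
        fderiv ℝ (fun y => fderiv ℝ φ y w) (↑g + x) = fderiv ℝ (fun y => fderiv ℝ φ y w) x := by
      intro g x
      rw [add_comm,
        fderiv_periodic_point _ ((hD w).differentiable one_ne_zero)
          (fun y => by rw [add_comm]; exact hDper w g y) x]
    obtain ⟨C, hC⟩ := exists_bound b hc hp
    refine integrable_of_bdd ((hc.clm_apply continuous_const).aestronglyMeasurable)
      (C := C * ‖w‖) (Eventually.of_forall fun x => ?_)
    calc ‖fderiv ℝ (fun y => fderiv ℝ φ y w) x w‖
        ≤ ‖fderiv ℝ (fun y => fderiv ℝ φ y w) x‖ * ‖w‖ := ContinuousLinearMap.le_opNorm _ _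
    _ ≤ C * ‖w‖ := mul_le_mul_of_nonneg_right (hC _) (norm_nonneg w)
  calc ∫ x in ZSpan.fundamentalDomain b, lap φ x
      = ∫ x in ZSpan.fundamentalDomain b, ∑ i : Fin 2,
          fderiv ℝ (fun y => fderiv ℝ φ y (EuclideanSpace.single i 1)) x
            (EuclideanSpace.single i 1) := by
        exact integral_congr_ae (Eventually.of_forall hlap)
  _ = ∑ i : Fin 2, ∫ x in ZSpan.fundamentalDomain b,
          fderiv ℝ (fun y => fderiv ℝ φ y (EuclideanSpace.single i 1)) x
            (EuclideanSpace.single i 1) := integral_finset_sum _ (fun i _ => hint _)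
  _ = 0 := by
      refine Finset.sum_eq_zero fun i _ => ?_
      refine integral_fderiv_zero b (hD _) ?_ _
      intro g x
      rw [add_comm,
        fderiv_periodic_point φ hdiff (fun y => by rw [add_comm]; exact hper g y) x]

end Calc
end Lattice

end AuxMachinery


lemma integrable_lap (b : Module.Basis (Fin 2) ℝ Plane) {φ : Plane → ℝ} (hφ : ContDiff ℝ 2 φ)
    (hper : ∀ g : GLat b, ∀ x : Plane, φ (↑g + x) = φ x) :
    Integrable (lap φ) (volume.restrict (ZSpan.fundamentalDomain b)) := by
  have hφO : ContDiffOn ℝ 2 φ Set.univ := hφ.contDiffOn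
  have hdiff : Differentiable ℝ φ := hφ.differentiable two_ne_zero
  have hD : ∀ w : Plane, ContDiff ℝ 1 (fun y => fderiv ℝ φ y w) := fun w =>
    (hφ.fderiv_right (by norm_num)).clm_apply contDiff_const
  have hDper : ∀ (w : Plane) (g : GLat b) (x : Plane),
      fderiv ℝ φ (↑g + x) w = fderiv ℝ φ x w := by
    intro w g x
    rw [add_comm,
      fderiv_periodic_point φ hdiff (fun y => by rw [add_comm]; exact hper g y) x]
  have hlap : ∀ x : Plane, lap φ x = ∑ i : Fin 2,
      fderiv ℝ (fun y => fderiv ℝ φ y (EuclideanSpace.single i 1)) x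
        (EuclideanSpace.single i 1) := fun x =>
    Finset.sum_congr rfl fun i _ => dirDeriv2_eq isOpen_univ hφO (Set.mem_univ x)
  haveI : IsFiniteMeasure (volume.restrict (ZSpan.fundamentalDomain b)) :=
    ⟨by rw [Measure.restrict_apply_univ]; exact fund_volume_lt_top b⟩
  have hint : ∀ w : Plane, Integrable (fun x => fderiv ℝ (fun y => fderiv ℝ φ y w) x w)
      (volume.restrict (ZSpan.fundamentalDomain b)) := by
    intro w
    have hc : Continuous (fderiv ℝ (fun y => fderiv ℝ φ y w)) :=
      (hD w).continuous_fderiv one_ne_zero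
    have hp : ∀ g : GLat b, ∀ x : Plane,
        fderiv ℝ (fun y => fderiv ℝ φ y w) (↑g + x) = fderiv ℝ (fun y => fderiv ℝ φ y w) x := by
      intro g x
      rw [add_comm,
        fderiv_periodic_point _ ((hD w).differentiable one_ne_zero)
          (fun y => by rw [add_comm]; exact hDper w g y) x]
    obtain ⟨C, hC⟩ := exists_bound b hc hp
    refine integrable_of_bdd ((hc.clm_apply continuous_const).aestronglyMeasurable)
      (C := C * ‖w‖) (Eventually.of_forall fun x => ?_)
    calc ‖fderiv ℝ (fun y => fderiv ℝ φ y w) x w‖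
        ≤ ‖fderiv ℝ (fun y => fderiv ℝ φ y w) x‖ * ‖w‖ := ContinuousLinearMap.le_opNorm _ _
    _ ≤ C * ‖w‖ := mul_le_mul_of_nonneg_right (hC _) (norm_nonneg w)
  have : lap φ = fun x => ∑ i : Fin 2,
      fderiv ℝ (fun y => fderiv ℝ φ y (EuclideanSpace.single i 1)) x
        (EuclideanSpace.single i 1) := funext hlap
  rw [this]
  exact integrable_finset_sum _ (fun i _ => hint _)

section Setting
open GudnasonSetting

variable {S : GudnasonSetting}

lemma orbit_eq (hS : S.Valid) (q : Plane) :
    S.orbit q = (fun z => q + z) '' ((Submodule.span ℤ (Set.range ⇑(Gbasis hS.indep))) : Set Plane) := by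
  ext x
  simp only [GudnasonSetting.orbit, Set.mem_setOf_eq, Set.mem_image, SetLike.mem_coe,
    mem_lat hS.indep]
  constructor
  · rintro ⟨k, rfl⟩; exact ⟨_, ⟨k, rfl⟩, by rw [add_assoc]⟩
  · rintro ⟨z, ⟨k, rfl⟩, rfl⟩; exact ⟨k, by rw [add_assoc]⟩

lemma Zset_closed (hS : S.Valid) : IsClosed S.Zset := by
  have hlat : IsClosed ((Submodule.span ℤ (Set.range ⇑(Gbasis hS.indep))) : Set Plane) := by
    have : IsClosed ((GLat (Gbasis hS.indep) : AddSubgroup Plane) : Set Plane) :=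
      AddSubgroup.isClosed_of_discrete
    exact this
  refine isClosed_iUnion_of_finite fun i => ?_
  rw [orbit_eq hS]
  exact (Homeomorph.addLeft (S.p i)).isClosedMap _ hlat

lemma Zset_null (hS : S.Valid) : volume S.Zset = 0 := by
  have hcount : S.Zset.Countable := by
    refine Set.countable_iUnion fun i => ?_
    rw [orbit_eq hS]
    have : Countable (Submodule.span ℤ (Set.range ⇑(Gbasis hS.indep))) := inferInstance
    exact (Set.countable_coe_iff.mp this).image _
  exact hcount.measure_zero volume
lemma key_identity (hS : S.Valid) (n : ℕ) {u₁ u₂ v₁ : Plane → ℝ}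
    (h : S.IsSolution n u₁ u₂ v₁) :
    ∫ x in S.fund, ((1 / (S.ε n) ^ 2) * (Real.exp (u₁ x) * (Real.exp (u₁ x) - 1)
        + (S.σ n) ^ 2 * Real.exp (u₂ x) * (Real.exp (u₁ x) - 1)
        - S.σ n * (Real.exp (u₁ x) + Real.exp (u₂ x)) * (Real.exp (u₂ x) - 1)))
      = -(8 * π * S.𝔐) := by
  set b := Gbasis hS.indep with hb
  have hfund : S.fund = ZSpan.fundamentalDomain b := fund_eq_aux hS.indep
  have hopen : IsOpen S.Zsetᶜ := (Zset_closed hS).isOpen_compl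
  have hv₁on : ContDiffOn ℝ 2 v₁ S.Zsetᶜ := h.v₁_smooth.contDiffOn
  have hptwise : ∀ x ∉ S.Zset,
      (1 / (S.ε n) ^ 2) * (Real.exp (u₁ x) * (Real.exp (u₁ x) - 1)
        + (S.σ n) ^ 2 * Real.exp (u₂ x) * (Real.exp (u₁ x) - 1)
        - S.σ n * (Real.exp (u₁ x) + Real.exp (u₂ x)) * (Real.exp (u₂ x) - 1))
      = -(8 * π * S.𝔐) + lap v₁ x := by
    intro x hx
    rw [← h.eq₁ x hx,
      lap_add_of_eqOn hopen hS.u₀_smooth hv₁on hx (fun y hy => h.v₁_def y hy),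
      hS.u₀_lap x hx]
  have hZnull : (volume.restrict S.fund) S.Zset = 0 :=
    le_antisymm (le_trans (Measure.restrict_le_self _) (le_of_eq (Zset_null hS))) zero_le
  have hae : ∀ᵐ x ∂(volume.restrict S.fund), x ∉ S.Zset := by
    rw [ae_iff]
    simpa [not_not] using hZnull
  have hcongr : ∫ x in S.fund, ((1 / (S.ε n) ^ 2) * (Real.exp (u₁ x) * (Real.exp (u₁ x) - 1)
        + (S.σ n) ^ 2 * Real.exp (u₂ x) * (Real.exp (u₁ x) - 1)
        - S.σ n * (Real.exp (u₁ x) + Real.exp (u₂ x)) * (Real.exp (u₂ x) - 1)))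
      = ∫ x in S.fund, (-(8 * π * S.𝔐) + lap v₁ x) := by
    refine integral_congr_ae ?_
    filter_upwards [hae] with x hx
    exact hptwise x hx
  rw [hcongr]
  haveI : IsFiniteMeasure (volume.restrict S.fund) :=
    ⟨by rw [Measure.restrict_apply_univ, hS.area]; exact ENNReal.one_lt_top⟩
  have hperv : ∀ g : GLat b, ∀ x : Plane, v₁ (↑g + x) = v₁ x :=
    periodic_lat hS.indep (fun x i => h.perv x i)
  have hlapint : Integrable (lap v₁) (volume.restrict S.fund) := by
    rw [hfund]; exact integrable_lap b h.v₁_smooth hperv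
  rw [integral_add (integrable_const _) hlapint, integral_const]
  have hlap0 : ∫ x in S.fund, lap v₁ x = 0 := by
    rw [hfund]; exact integral_lap_zero b h.v₁_smooth hperv
  rw [hlap0, Measure.real, Measure.restrict_apply_univ, hS.area]
  simp

end Setting

set_option maxHeartbeats 2000000 in
open GudnasonSetting in
/-- If `sup_{𝕋∖Z} u₁ₙ ≤ -ν₀ < 0`, then for large `n`,
`4π𝔐 ≤ ∫_𝕋 e^{w₁ₙ} ≤ 2(𝔑 + 8π𝔐)/(1 - e^{-ν₀})`, where `w₁ₙ = u₁ₙ - 2 ln εₙ`. -/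
theorem statement12 (S : GudnasonSetting) (hS : S.Valid)
    (u₁ u₂ v₁ : ℕ → Plane → ℝ)
    (hsol : ∀ n, S.IsSolution n (u₁ n) (u₂ n) (v₁ n))
    (ν₀ : ℝ) (hν₀ : 0 < ν₀) (hsup : ∀ n : ℕ, ∀ x ∉ S.Zset, u₁ n x ≤ -ν₀) :
    ∃ N₀ : ℕ, ∀ n ≥ N₀,
      4 * π * S.𝔐 ≤ (∫ x in S.fund, Real.exp (u₁ n x - 2 * Real.log (S.ε n))) ∧
      (∫ x in S.fund, Real.exp (u₁ n x - 2 * Real.log (S.ε n))) ≤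
        2 * (S.𝔑 + 8 * π * S.𝔐) / (1 - Real.exp (-ν₀)) := by
  classical
  have h𝔐pos : 0 < S.𝔐 := by
    have hne : Nonempty (Fin S.N) := Fin.pos_iff_nonempty.mp hS.hN
    exact Finset.sum_pos (fun i _ => by exact_mod_cast hS.hm i) Finset.univ_nonempty
  have hπ𝔐 : 0 < 4 * π * S.𝔐 := by positivity
  have he1 : Real.exp (-ν₀) < 1 := Real.exp_lt_one_iff.mpr (by linarith)
  have hν : 0 < 1 - Real.exp (-ν₀) := by linarith
  have hεt : Tendsto (fun n => S.𝔑 ^ 2 * (S.ε n) ^ 2) atTop (nhds 0) := by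
    have h1 : Tendsto (fun n => S.ε n) atTop (nhds 0) := by
      simpa [GudnasonSetting.ε, one_div, Pi.inv_def] using hS.hsum.inv_tendsto_atTop
    have h2 : Tendsto (fun n => (S.ε n) ^ 2) atTop (nhds 0) := by
      simpa [pow_two] using h1.mul h1
    simpa using h2.const_mul (S.𝔑 ^ 2)
  have hev : ∀ᶠ n in atTop, S.𝔑 ^ 2 * (S.ε n) ^ 2 < 4 * π * S.𝔐 :=
    hεt.eventually_lt_const hπ𝔐
  obtain ⟨N₀, hN₀⟩ := eventually_atTop.mp hev
  refine ⟨N₀, fun n hn => ?_⟩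
  obtain h := hsol n
  have hαβ : 0 < S.α n + S.β n := add_pos (hS.hα n) (hS.hβ n)
  have hε : 0 < S.ε n := by rw [GudnasonSetting.ε]; positivity
  have hβα : 0 < S.β n - S.α n := by
    have h1 := hS.hcoup₁ n; nlinarith
  have hσ : 0 < S.σ n := div_pos hβα hαβ
  have hσeq : S.σ n = ((S.β n - S.α n) * (S.α n + S.β n)) * (S.ε n) ^ 2 := by
    rw [GudnasonSetting.σ, GudnasonSetting.ε]
    field_simp
  have hσle : S.σ n ≤ S.𝔑 * (S.ε n) ^ 2 := by
    rw [hσeq]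
    exact mul_le_mul_of_nonneg_right (hS.hcoup₂ n) (by positivity)
  have hσsmall : S.σ n * S.𝔑 < 4 * π * S.𝔐 := by
    refine lt_of_le_of_lt ?_ (hN₀ n hn)
    nlinarith [hS.h𝔑.le, sq_nonneg (S.ε n)]
  -- measure set-up
  haveI : IsFiniteMeasure (volume.restrict S.fund) :=
    ⟨by rw [Measure.restrict_apply_univ, hS.area]; exact ENNReal.one_lt_top⟩
  have hμuniv : ((volume.restrict S.fund) Set.univ).toReal = 1 := by
    rw [Measure.restrict_apply_univ, hS.area]; simp
  have hZnull : (volume.restrict S.fund) S.Zset = 0 :=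
    le_antisymm (le_trans (Measure.restrict_le_self _) (le_of_eq (Zset_null hS))) zero_le
  have hae : ∀ᵐ x ∂(volume.restrict S.fund), x ∉ S.Zset := by
    rw [ae_iff]; simpa [not_not] using hZnull
  -- measurability
  have hu₀m : AEMeasurable S.u₀ volume := by
    have h1 : AEMeasurable S.u₀ (volume.restrict S.Zsetᶜ) :=
      (hS.u₀_smooth.continuousOn).aemeasurable (Zset_closed hS).isOpen_compl.measurableSet
    have h2 : (S.Zsetᶜ : Set Plane) =ᵐ[volume] (Set.univ : Set Plane) := by
      rw [ae_eq_univ]; simpa [compl_compl] using Zset_null hS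
    rwa [Measure.restrict_congr_set h2, Measure.restrict_univ] at h1
  have hu₁ae : u₁ n =ᵐ[volume] fun x => S.u₀ x + v₁ n x := by
    rw [Filter.EventuallyEq, ae_iff]
    refine measure_mono_null (fun x hx => ?_) (Zset_null hS)
    by_contra hxZ
    exact hx (h.v₁_def x hxZ)
  have hu₁m : AEMeasurable (u₁ n) volume :=
    (hu₀m.add (h.v₁_smooth.continuous.aemeasurable)).congr hu₁ae.symm
  have hfm : AEMeasurable (fun x => Real.exp (u₁ n x)) (volume.restrict S.fund) :=
    Real.measurable_exp.comp_aemeasurable hu₁m.restrict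
  have hgm : AEMeasurable (fun x => Real.exp (u₂ n x)) (volume.restrict S.fund) :=
    (Real.continuous_exp.comp h.u₂_smooth.continuous).aemeasurable
  -- pointwise bounds
  have hf0 : ∀ x, 0 < Real.exp (u₁ n x) := fun x => Real.exp_pos _
  have hg0 : ∀ x, 0 < Real.exp (u₂ n x) := fun x => Real.exp_pos _
  have hg1 : ∀ x, Real.exp (u₂ n x) < 1 := fun x => Real.exp_lt_one_iff.mpr (h.u₂_neg x)
  have hfle : ∀ᵐ x ∂(volume.restrict S.fund), Real.exp (u₁ n x) ≤ Real.exp (-ν₀) :=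
    hae.mono fun x hx => Real.exp_le_exp.mpr (hsup n x hx)
  have hc2pos : 0 < 1 / (S.ε n) ^ 2 := by positivity
  have hε2 : (0:ℝ) < (S.ε n) ^ 2 := by positivity
  have hσc2 : S.σ n * (1 / (S.ε n) ^ 2) ≤ S.𝔑 := by
    rw [mul_one_div, div_le_iff₀ hε2]
    exact hσle
  -- the integrand of the statement
  have hFeq : ∀ x : Plane, Real.exp (u₁ n x - 2 * Real.log (S.ε n))
      = (1 / (S.ε n) ^ 2) * Real.exp (u₁ n x) := by
    intro x
    have hexp : Real.exp (2 * Real.log (S.ε n)) = (S.ε n) ^ 2 := by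
      rw [two_mul, Real.exp_add, Real.exp_log hε, pow_two]
    rw [Real.exp_sub, hexp, div_eq_mul_inv, one_div, mul_comm]
  -- integrability
  have hint : ∀ (φ : Plane → ℝ), AEMeasurable φ (volume.restrict S.fund) →
      ∀ C : ℝ, (∀ᵐ x ∂(volume.restrict S.fund), |φ x| ≤ C) →
      Integrable φ (volume.restrict S.fund) := by
    intro φ hm C hb
    exact integrable_of_bdd hm.aestronglyMeasurable
      (by simpa [Real.norm_eq_abs] using hb)
  have hFm : AEMeasurable (fun x => (1 / (S.ε n) ^ 2) * Real.exp (u₁ n x))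
      (volume.restrict S.fund) := hfm.const_mul _
  have hFint : Integrable (fun x => (1 / (S.ε n) ^ 2) * Real.exp (u₁ n x))
      (volume.restrict S.fund) := by
    refine hint _ hFm (1 / (S.ε n) ^ 2) ?_
    filter_upwards [hfle] with x hx
    have hfx1 : Real.exp (u₁ n x) ≤ 1 := by linarith
    have l1 : 0 ≤ 1 / (S.ε n) ^ 2 * Real.exp (u₁ n x) :=
      mul_nonneg hc2pos.le (hf0 x).le
    have l2 : 1 / (S.ε n) ^ 2 * Real.exp (u₁ n x) ≤ 1 / (S.ε n) ^ 2 * 1 :=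
      mul_le_mul_of_nonneg_left hfx1 hc2pos.le
    rw [abs_le]
    constructor <;> linarith
  have hPm : AEMeasurable (fun x => (1 / (S.ε n) ^ 2)
      * (Real.exp (u₁ n x) * (1 - Real.exp (u₁ n x)))) (volume.restrict S.fund) :=
    (hfm.mul (aemeasurable_const.sub hfm)).const_mul _
  have hPint : Integrable (fun x => (1 / (S.ε n) ^ 2)
      * (Real.exp (u₁ n x) * (1 - Real.exp (u₁ n x)))) (volume.restrict S.fund) := by
    refine hint _ hPm (1 / (S.ε n) ^ 2) ?_
    filter_upwards [hfle] with x hx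
    have hfx1 : Real.exp (u₁ n x) ≤ 1 := by linarith
    have h1 : 0 ≤ Real.exp (u₁ n x) * (1 - Real.exp (u₁ n x)) :=
      mul_nonneg (hf0 x).le (by linarith)
    have h2 : Real.exp (u₁ n x) * (1 - Real.exp (u₁ n x)) ≤ 1 := by
      nlinarith [mul_self_nonneg (Real.exp (u₁ n x))]
    have l1 : 0 ≤ 1 / (S.ε n) ^ 2 * (Real.exp (u₁ n x) * (1 - Real.exp (u₁ n x))) :=
      mul_nonneg hc2pos.le h1
    have l2 : 1 / (S.ε n) ^ 2 * (Real.exp (u₁ n x) * (1 - Real.exp (u₁ n x)))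
        ≤ 1 / (S.ε n) ^ 2 * 1 := mul_le_mul_of_nonneg_left h2 hc2pos.le
    rw [abs_le]
    constructor <;> linarith
  have hQm : AEMeasurable (fun x => (1 / (S.ε n) ^ 2)
      * ((S.σ n) ^ 2 * (Real.exp (u₂ n x) * (1 - Real.exp (u₁ n x)))))
      (volume.restrict S.fund) :=
    ((hgm.mul (aemeasurable_const.sub hfm)).const_mul _).const_mul _
  have hQint : Integrable (fun x => (1 / (S.ε n) ^ 2)
      * ((S.σ n) ^ 2 * (Real.exp (u₂ n x) * (1 - Real.exp (u₁ n x)))))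
      (volume.restrict S.fund) := by
    refine hint _ hQm ((1 / (S.ε n) ^ 2) * (S.σ n) ^ 2) ?_
    filter_upwards [hfle] with x hx
    have hfx1 : Real.exp (u₁ n x) ≤ 1 := by linarith
    have h1 : 0 ≤ Real.exp (u₂ n x) * (1 - Real.exp (u₁ n x)) :=
      mul_nonneg (hg0 x).le (by linarith)
    have h2 : Real.exp (u₂ n x) * (1 - Real.exp (u₁ n x)) ≤ 1 :=
      mul_le_one₀ (hg1 x).le (by linarith) (by linarith [hf0 x])
    have m0 : 0 ≤ (S.σ n) ^ 2 * (Real.exp (u₂ n x) * (1 - Real.exp (u₁ n x))) :=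
      mul_nonneg (sq_nonneg _) h1
    have m1 : (S.σ n) ^ 2 * (Real.exp (u₂ n x) * (1 - Real.exp (u₁ n x))) ≤ (S.σ n) ^ 2 * 1 :=
      mul_le_mul_of_nonneg_left h2 (sq_nonneg _)
    have l1 : 0 ≤ 1 / (S.ε n) ^ 2
        * ((S.σ n) ^ 2 * (Real.exp (u₂ n x) * (1 - Real.exp (u₁ n x)))) :=
      mul_nonneg hc2pos.le m0
    have l2 : 1 / (S.ε n) ^ 2
        * ((S.σ n) ^ 2 * (Real.exp (u₂ n x) * (1 - Real.exp (u₁ n x))))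
        ≤ 1 / (S.ε n) ^ 2 * ((S.σ n) ^ 2 * 1) := mul_le_mul_of_nonneg_left m1 hc2pos.le
    rw [abs_le]
    constructor <;> nlinarith [l1, l2]
  have hRm : AEMeasurable (fun x => (1 / (S.ε n) ^ 2)
      * (S.σ n * ((Real.exp (u₁ n x) + Real.exp (u₂ n x)) * (1 - Real.exp (u₂ n x)))))
      (volume.restrict S.fund) :=
    (((hfm.add hgm).mul (aemeasurable_const.sub hgm)).const_mul _).const_mul _
  have hRint : Integrable (fun x => (1 / (S.ε n) ^ 2)
      * (S.σ n * ((Real.exp (u₁ n x) + Real.exp (u₂ n x)) * (1 - Real.exp (u₂ n x)))))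
      (volume.restrict S.fund) := by
    refine hint _ hRm ((1 / (S.ε n) ^ 2) * (S.σ n * 2)) ?_
    filter_upwards [hfle] with x hx
    have hfx1 : Real.exp (u₁ n x) ≤ 1 := by linarith
    have hZ0 : 0 ≤ (Real.exp (u₁ n x) + Real.exp (u₂ n x)) * (1 - Real.exp (u₂ n x)) :=
      mul_nonneg (by nlinarith [hf0 x, hg0 x]) (by nlinarith [hg1 x])
    have hZ2 : (Real.exp (u₁ n x) + Real.exp (u₂ n x)) * (1 - Real.exp (u₂ n x)) ≤ 2 := by
      nlinarith [mul_nonneg (add_nonneg (hf0 x).le (hg0 x).le) (hg0 x).le, hg1 x]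
    have m0 : 0 ≤ S.σ n * ((Real.exp (u₁ n x) + Real.exp (u₂ n x)) * (1 - Real.exp (u₂ n x))) :=
      mul_nonneg hσ.le hZ0
    have m1 : S.σ n * ((Real.exp (u₁ n x) + Real.exp (u₂ n x)) * (1 - Real.exp (u₂ n x)))
        ≤ S.σ n * 2 := mul_le_mul_of_nonneg_left hZ2 hσ.le
    have l1 : 0 ≤ 1 / (S.ε n) ^ 2
        * (S.σ n * ((Real.exp (u₁ n x) + Real.exp (u₂ n x)) * (1 - Real.exp (u₂ n x)))) :=
      mul_nonneg hc2pos.le m0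
    have l2 : 1 / (S.ε n) ^ 2
        * (S.σ n * ((Real.exp (u₁ n x) + Real.exp (u₂ n x)) * (1 - Real.exp (u₂ n x))))
        ≤ 1 / (S.ε n) ^ 2 * (S.σ n * 2) := mul_le_mul_of_nonneg_left m1 hc2pos.le
    rw [abs_le]
    constructor <;> linarith
  -- the key identity, rearranged
  have hkey := key_identity hS n h
  have hsplit : (∫ x in S.fund, (1 / (S.ε n) ^ 2)
        * (Real.exp (u₁ n x) * (1 - Real.exp (u₁ n x))))
      + (∫ x in S.fund, (1 / (S.ε n) ^ 2)
        * ((S.σ n) ^ 2 * (Real.exp (u₂ n x) * (1 - Real.exp (u₁ n x)))))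
      - (∫ x in S.fund, (1 / (S.ε n) ^ 2)
        * (S.σ n * ((Real.exp (u₁ n x) + Real.exp (u₂ n x)) * (1 - Real.exp (u₂ n x)))))
      = 8 * π * S.𝔐 := by
    have hadd : (∫ x in S.fund, ((1 / (S.ε n) ^ 2)
          * (Real.exp (u₁ n x) * (1 - Real.exp (u₁ n x)))
        + (1 / (S.ε n) ^ 2) * ((S.σ n) ^ 2 * (Real.exp (u₂ n x) * (1 - Real.exp (u₁ n x))))))
        = (∫ x in S.fund, (1 / (S.ε n) ^ 2)
          * (Real.exp (u₁ n x) * (1 - Real.exp (u₁ n x))))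
        + (∫ x in S.fund, (1 / (S.ε n) ^ 2)
          * ((S.σ n) ^ 2 * (Real.exp (u₂ n x) * (1 - Real.exp (u₁ n x))))) :=
      integral_add hPint hQint
    have hsub : (∫ x in S.fund, (((1 / (S.ε n) ^ 2)
          * (Real.exp (u₁ n x) * (1 - Real.exp (u₁ n x)))
        + (1 / (S.ε n) ^ 2) * ((S.σ n) ^ 2 * (Real.exp (u₂ n x) * (1 - Real.exp (u₁ n x)))))
        - (1 / (S.ε n) ^ 2) * (S.σ n * ((Real.exp (u₁ n x) + Real.exp (u₂ n x))
            * (1 - Real.exp (u₂ n x))))))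
        = (∫ x in S.fund, ((1 / (S.ε n) ^ 2)
          * (Real.exp (u₁ n x) * (1 - Real.exp (u₁ n x)))
        + (1 / (S.ε n) ^ 2) * ((S.σ n) ^ 2 * (Real.exp (u₂ n x) * (1 - Real.exp (u₁ n x))))))
        - (∫ x in S.fund, (1 / (S.ε n) ^ 2)
          * (S.σ n * ((Real.exp (u₁ n x) + Real.exp (u₂ n x)) * (1 - Real.exp (u₂ n x))))) :=
      integral_sub (hPint.add hQint) hRint
    rw [← hadd, ← hsub]
    have heq : ∀ x : Plane,
        ((1 / (S.ε n) ^ 2) * (Real.exp (u₁ n x) * (1 - Real.exp (u₁ n x)))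
          + (1 / (S.ε n) ^ 2) * ((S.σ n) ^ 2 * (Real.exp (u₂ n x) * (1 - Real.exp (u₁ n x))))
          - (1 / (S.ε n) ^ 2) * (S.σ n * ((Real.exp (u₁ n x) + Real.exp (u₂ n x))
              * (1 - Real.exp (u₂ n x)))))
        = -((1 / (S.ε n) ^ 2) * (Real.exp (u₁ n x) * (Real.exp (u₁ n x) - 1)
            + (S.σ n) ^ 2 * Real.exp (u₂ n x) * (Real.exp (u₁ n x) - 1)
            - S.σ n * (Real.exp (u₁ n x) + Real.exp (u₂ n x)) * (Real.exp (u₂ n x) - 1))) := by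
      intro x; ring
    calc ∫ x in S.fund, ((1 / (S.ε n) ^ 2) * (Real.exp (u₁ n x) * (1 - Real.exp (u₁ n x)))
          + (1 / (S.ε n) ^ 2) * ((S.σ n) ^ 2 * (Real.exp (u₂ n x) * (1 - Real.exp (u₁ n x))))
          - (1 / (S.ε n) ^ 2) * (S.σ n * ((Real.exp (u₁ n x) + Real.exp (u₂ n x))
              * (1 - Real.exp (u₂ n x)))))
        = ∫ x in S.fund, -((1 / (S.ε n) ^ 2) * (Real.exp (u₁ n x) * (Real.exp (u₁ n x) - 1)
            + (S.σ n) ^ 2 * Real.exp (u₂ n x) * (Real.exp (u₁ n x) - 1)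
            - S.σ n * (Real.exp (u₁ n x) + Real.exp (u₂ n x)) * (Real.exp (u₂ n x) - 1))) := by
          exact integral_congr_ae (Eventually.of_forall heq)
    _ = 8 * π * S.𝔐 := by rw [integral_neg, hkey]; ring
  -- integral bounds
  have hQ0 : 0 ≤ ∫ x in S.fund, (1 / (S.ε n) ^ 2)
      * ((S.σ n) ^ 2 * (Real.exp (u₂ n x) * (1 - Real.exp (u₁ n x)))) := by
    refine integral_nonneg_of_ae ?_
    filter_upwards [hfle] with x hx
    have hfx1 : Real.exp (u₁ n x) ≤ 1 := by linarith
    exact mul_nonneg hc2pos.le (mul_nonneg (sq_nonneg _)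
      (mul_nonneg (hg0 x).le (by linarith)))
  have hR0 : 0 ≤ ∫ x in S.fund, (1 / (S.ε n) ^ 2)
      * (S.σ n * ((Real.exp (u₁ n x) + Real.exp (u₂ n x)) * (1 - Real.exp (u₂ n x)))) := by
    refine integral_nonneg_of_ae (Eventually.of_forall fun x => ?_)
    exact mul_nonneg hc2pos.le (mul_nonneg hσ.le (mul_nonneg
      (by nlinarith [hf0 x, hg0 x]) (by nlinarith [hg1 x])))
  have hconst_int : ∀ c : ℝ, (∫ (_ : Plane) in S.fund, c) = c := by
    intro c
    rw [integral_const, Measure.real, Measure.restrict_apply_univ, hS.area]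
    simp
  have hQle : (∫ x in S.fund, (1 / (S.ε n) ^ 2)
      * ((S.σ n) ^ 2 * (Real.exp (u₂ n x) * (1 - Real.exp (u₁ n x)))))
      ≤ S.σ n * S.𝔑 := by
    have hmono : (∫ x in S.fund, (1 / (S.ε n) ^ 2)
        * ((S.σ n) ^ 2 * (Real.exp (u₂ n x) * (1 - Real.exp (u₁ n x)))))
        ≤ ∫ (_ : Plane) in S.fund, S.σ n * S.𝔑 := by
      refine integral_mono_ae hQint (integrable_const _) ?_
      filter_upwards [hfle] with x hx
      have hfx1 : Real.exp (u₁ n x) ≤ 1 := by linarith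
      have h2 : Real.exp (u₂ n x) * (1 - Real.exp (u₁ n x)) ≤ 1 :=
        mul_le_one₀ (hg1 x).le (by linarith) (by linarith [hf0 x])
      have h1 : 0 ≤ Real.exp (u₂ n x) * (1 - Real.exp (u₁ n x)) :=
        mul_nonneg (hg0 x).le (by linarith)
      have key : (1 / (S.ε n) ^ 2) * ((S.σ n) ^ 2 * (Real.exp (u₂ n x)
          * (1 - Real.exp (u₁ n x)))) ≤ S.σ n * (S.σ n * (1 / (S.ε n) ^ 2)) := by
        nlinarith [mul_nonneg (mul_nonneg (mul_pos hσ hσ).le hc2pos.le)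
          (sub_nonneg.mpr h2)]
      refine le_trans key ?_
      exact mul_le_mul_of_nonneg_left hσc2 hσ.le
    rwa [hconst_int] at hmono
  have hRle : (∫ x in S.fund, (1 / (S.ε n) ^ 2)
      * (S.σ n * ((Real.exp (u₁ n x) + Real.exp (u₂ n x)) * (1 - Real.exp (u₂ n x)))))
      ≤ 2 * S.𝔑 := by
    have hmono : (∫ x in S.fund, (1 / (S.ε n) ^ 2)
        * (S.σ n * ((Real.exp (u₁ n x) + Real.exp (u₂ n x)) * (1 - Real.exp (u₂ n x)))))
        ≤ ∫ (_ : Plane) in S.fund, 2 * S.𝔑 := by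
      refine integral_mono_ae hRint (integrable_const _) ?_
      filter_upwards [hfle] with x hx
      have hfx1 : Real.exp (u₁ n x) ≤ 1 := by linarith
      have hZ2 : (Real.exp (u₁ n x) + Real.exp (u₂ n x)) * (1 - Real.exp (u₂ n x)) ≤ 2 := by
        nlinarith [mul_nonneg (add_nonneg (hf0 x).le (hg0 x).le) (hg0 x).le, hg1 x]
      have key : (1 / (S.ε n) ^ 2) * (S.σ n * ((Real.exp (u₁ n x) + Real.exp (u₂ n x))
          * (1 - Real.exp (u₂ n x)))) ≤ 2 * (S.σ n * (1 / (S.ε n) ^ 2)) := by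
        nlinarith [mul_nonneg (mul_pos hσ hc2pos).le (sub_nonneg.mpr hZ2)]
      refine le_trans key ?_
      linarith [hσc2, hσ]
    rwa [hconst_int] at hmono
  have hPleF : (∫ x in S.fund, (1 / (S.ε n) ^ 2)
      * (Real.exp (u₁ n x) * (1 - Real.exp (u₁ n x))))
      ≤ ∫ x in S.fund, (1 / (S.ε n) ^ 2) * Real.exp (u₁ n x) := by
    refine integral_mono_ae hPint hFint (Eventually.of_forall fun x => ?_)
    nlinarith [mul_nonneg hc2pos.le (mul_self_nonneg (Real.exp (u₁ n x)))]
  have hPge : (1 - Real.exp (-ν₀)) * (∫ x in S.fund, (1 / (S.ε n) ^ 2) * Real.exp (u₁ n x))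
      ≤ ∫ x in S.fund, (1 / (S.ε n) ^ 2)
        * (Real.exp (u₁ n x) * (1 - Real.exp (u₁ n x))) := by
    rw [← integral_const_mul]
    refine integral_mono_ae (hFint.const_mul _) hPint ?_
    filter_upwards [hfle] with x hx
    nlinarith [mul_nonneg (mul_nonneg hc2pos.le (hf0 x).le)
      (sub_nonneg.mpr hx)]
  have hIeq : (∫ x in S.fund, Real.exp (u₁ n x - 2 * Real.log (S.ε n)))
      = ∫ x in S.fund, (1 / (S.ε n) ^ 2) * Real.exp (u₁ n x) :=
    integral_congr_ae (Eventually.of_forall hFeq)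
  rw [hIeq]
  constructor
  · linarith [hPleF, hQle, hR0, hσsmall, hsplit]
  · rw [le_div_iff₀ hν]
    nlinarith [hPge, hQ0, hRle, hsplit, hπ𝔐, hν]
end
end
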